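/- Let ū ∈ U_ad be weakly Pareto optimal. Then for every target direction r ∈ ℝ^k with r > 0 and every t̄ ∈ ℝ, the point ū is a global solution of the reformulated Pascoletti–Serafini problem (RP^PS_{z,r}) with reference point z := Ĵ(ū) − t̄ r, i.e. Ĵ^{g_{z,r}}(ū) ≤ Ĵ^{g_{z,r}}(u) for all u ∈ U_ad. -/
import Mathlib


/-- The Pascoletti–Serafini scalarization function
`u ↦ max_{1 ≤ i ≤ k} (Ĵ_i(u) − z_i) / r_i`, evaluated at the objective vector `y`. -/
noncomputable def psScal {k : ℕ} (hk : 0 < k) (z r : Fin k → ℝ) (y : Fin k → ℝ) : ℝ :=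
  Finset.univ.sup' (Finset.univ_nonempty_iff.mpr ⟨⟨0, hk⟩⟩) fun i => (y i - z i) / r i

/-- **Every weakly Pareto optimal point solves a PS problem.**
Let `ubar ∈ Uad` be weakly Pareto optimal.  Then for every target direction `r > 0`
and every `tbar ∈ ℝ`, the point `ubar` is a global solution of the reformulated
Pascoletti–Serafini problem with reference point `z := J(ubar) − tbar r`, i.e.
`Ĵ^{g_{z,r}}(ubar) ≤ Ĵ^{g_{z,r}}(u)` for all `u ∈ Uad`. -/
theorem weakly_pareto_optimal_solves_psProblem
    {U : Type*} [NormedAddCommGroup U] [InnerProductSpace ℝ U] [CompleteSpace U]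
    {k : ℕ} (hk : 2 ≤ k) (Uad : Set U) (hUad : Uad.Nonempty)
    (J : U → Fin k → ℝ)
    (ubar : U) (hubar : ubar ∈ Uad)
    (hweak : ∀ ut ∈ Uad, ¬ (∀ i, J ut i < J ubar i))
    (r : Fin k → ℝ) (hr : ∀ i, 0 < r i) (tbar : ℝ) :
    ∀ u ∈ Uad,
      psScal (by omega) (fun i => J ubar i - tbar * r i) r (J ubar) ≤
        psScal (by omega) (fun i => J ubar i - tbar * r i) r (J u) := by
  intro u hu
  unfold psScal
  have hne : (Finset.univ : Finset (Fin k)).Nonempty := Finset.univ_nonempty_iff.mpr ⟨⟨0, by omega⟩⟩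
  -- LHS equals tbar
  have hL : (Finset.univ.sup' hne fun i => (J ubar i - (J ubar i - tbar * r i)) / r i) = tbar := by
    have : (fun i : Fin k => (J ubar i - (J ubar i - tbar * r i)) / r i) = fun _ => tbar := by
      funext i
      rw [sub_sub_cancel, mul_div_assoc, div_self (hr i).ne', mul_one]
    rw [this, Finset.sup'_const]
  rw [hL]
  obtain ⟨i, hi⟩ := not_forall.mp (hweak u hu)
  have hi' : J ubar i ≤ J u i := le_of_not_gt hi
  have : tbar ≤ (J u i - (J ubar i - tbar * r i)) / r i := by
    rw [le_div_iff₀ (hr i)]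
    nlinarith [hr i]
  exact this.trans (Finset.le_sup' (fun j => (J u j - (J ubar j - tbar * r j)) / r j) (Finset.mem_univ i))
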